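/- Let f : (0,∞) → ℝ be continuous, positive, and nonincreasing, and suppose v : [0,∞) → ℝ is continuous, twice continuously differentiable on (0,∞), satisfies −v''(t) = f(v(t)) for t > 0, v(0) = 0, v(t) > 0 and v'(t) > 0 for all t > 0, and v(t) → ∞ as t → ∞. Then ∫₁^∞ f(t) dt < ∞. -/

import Mathlib

open MeasureTheory Set Filter

theorem stmt_10 (f : ℝ → ℝ) (hfc : ContinuousOn f (Set.Ioi 0))
    (hfpos : ∀ t : ℝ, 0 < t → 0 < f t)
    (hfanti : AntitoneOn f (Set.Ioi 0))
    (v : ℝ → ℝ) (hvc : ContinuousOn v (Set.Ici 0))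
    (hvC2 : ContDiffOn ℝ 2 v (Set.Ioi 0))
    (hode : ∀ t : ℝ, 0 < t → -(deriv (deriv v) t) = f (v t))
    (hv0 : v 0 = 0)
    (hvpos : ∀ t : ℝ, 0 < t → 0 < v t)
    (hv' : ∀ t : ℝ, 0 < t → 0 < deriv v t)
    (hvtop : Filter.Tendsto v Filter.atTop Filter.atTop) :
    MeasureTheory.IntegrableOn f (Set.Ioi 1) := by
  have hInt : ∀ a b : ℝ, 0 < a → 0 < b → IntervalIntegrable f volume a b := by
    intro a b ha hb
    apply ContinuousOn.intervalIntegrable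
    exact hfc.mono (fun x hx => lt_of_lt_of_le (lt_min ha hb) hx.1)
  have hv1 : 0 < v 1 := hvpos 1 one_pos
  set g : ℝ → ℝ := fun t => (deriv v t) ^ 2 / 2 + ∫ s in (v 1)..(v t), f s with hg
  have hgd : ∀ t : ℝ, 0 < t → HasDerivAt g 0 t := by
    intro t ht
    have hmem : Ioi (0 : ℝ) ∈ nhds t := Ioi_mem_nhds ht
    have hdv : HasDerivAt v (deriv v t) t :=
      ((hvC2.differentiableOn (by norm_num)).differentiableAt hmem).hasDerivAt
    have hC1 : ContDiffOn ℝ 1 (deriv v) (Ioi 0) :=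
      hvC2.deriv_of_isOpen isOpen_Ioi (by norm_num)
    have hdv2 : HasDerivAt (deriv v) (deriv (deriv v) t) t :=
      ((hC1.differentiableOn (by norm_num)).differentiableAt hmem).hasDerivAt
    have h1 : HasDerivAt (fun t => (deriv v t) ^ 2 / 2)
        (2 * deriv v t ^ 1 * deriv (deriv v) t / 2) t :=
      (hdv2.pow 2).div_const 2
    have hvt : 0 < v t := hvpos t ht
    have hcf : ContinuousAt f (v t) := hfc.continuousAt (Ioi_mem_nhds hvt)
    have hmeas : StronglyMeasurableAtFilter f (nhds (v t)) :=
      ⟨Ioi 0, Ioi_mem_nhds hvt, hfc.aestronglyMeasurable measurableSet_Ioi⟩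
    have h2 : HasDerivAt (fun u => ∫ s in (v 1)..u, f s) (f (v t)) (v t) :=
      intervalIntegral.integral_hasDerivAt_right (hInt _ _ hv1 hvt) hmeas hcf
    have h3 : HasDerivAt (fun t => ∫ s in (v 1)..(v t), f s) (f (v t) * deriv v t) t :=
      h2.comp t hdv
    have h4 : HasDerivAt g (2 * deriv v t ^ 1 * deriv (deriv v) t / 2 + f (v t) * deriv v t) t :=
      h1.add h3
    have h5 : deriv (deriv v) t = -f (v t) := by linarith [hode t ht]
    have : 2 * deriv v t ^ 1 * deriv (deriv v) t / 2 + f (v t) * deriv v t = 0 := by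
      rw [h5]; ring
    rwa [this] at h4
  have hganti : AntitoneOn g (Ici 1) := by
    apply antitoneOn_of_deriv_nonpos (convex_Ici 1)
    · intro x hx
      exact ((hgd x (lt_of_lt_of_le one_pos hx)).continuousAt).continuousWithinAt
    · intro x hx
      rw [interior_Ici] at hx
      exact (hgd x (lt_trans one_pos hx)).differentiableAt.differentiableWithinAt
    · intro x hx
      rw [interior_Ici] at hx
      rw [(hgd x (lt_trans one_pos hx)).deriv]
  apply MeasureTheory.integrableOn_Ioi_of_intervalIntegral_norm_bounded
    ((∫ s in (1 : ℝ)..(v 1), f s) + g 1) 1 (b := v) ?_ hvtop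
  · filter_upwards [eventually_ge_atTop (1 : ℝ),
      hvtop.eventually (eventually_ge_atTop (1 : ℝ))] with i hi hvi
    have hvipos : (0 : ℝ) < v i := lt_of_lt_of_le one_pos hvi
    have hnorm : ∫ x in (1 : ℝ)..v i, ‖f x‖ = ∫ x in (1 : ℝ)..v i, f x := by
      apply intervalIntegral.integral_congr
      intro x hx
      rw [uIcc_of_le hvi] at hx
      exact Real.norm_of_nonneg (le_of_lt (hfpos x (lt_of_lt_of_le one_pos hx.1)))
    have hsplit : (∫ x in (1 : ℝ)..(v 1), f x) + ∫ x in (v 1)..(v i), f x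
        = ∫ x in (1 : ℝ)..v i, f x :=
      intervalIntegral.integral_add_adjacent_intervals
        (hInt 1 (v 1) one_pos hv1) (hInt (v 1) (v i) hv1 hvipos)
    have hmono : g i ≤ g 1 := hganti self_mem_Ici (mem_Ici.mpr hi) hi
    have hsq : 0 ≤ (deriv v i) ^ 2 / 2 := by positivity
    rw [hnorm, ← hsplit]
    have hgi : g i = (deriv v i) ^ 2 / 2 + ∫ s in (v 1)..(v i), f s := rfl
    have hg1 : g 1 = (deriv v 1) ^ 2 / 2 + ∫ s in (v 1)..(v 1), f s := rfl
    rw [hgi, hg1] at hmono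
    have h0 : (∫ s in (v 1)..(v 1), f s) = 0 := intervalIntegral.integral_same
    rw [hg1, h0]
    linarith
  · intro i
    rcases le_or_gt (v i) 1 with h | h
    · rw [Ioc_eq_empty (not_lt.mpr h)]
      exact integrableOn_empty
    · exact (hInt 1 (v i) one_pos (lt_trans one_pos h)).1
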